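/- Let χ₁ mod r₁, χ₂ mod r₂ be primitive characters, q₀ = [r₁,r₂], and let b(q) = φ(q)^{-2} c_{χ₁χ₂χ_{0,q}}(-m) τ(conj(χ₁)χ_{0,q}) τ(conj(χ₂)χ_{0,q}). If b(q₀t) ≠ 0 for some positive integer t, then t is squarefree, (t, q₀) = 1, and writing t = hk with h the product of primes dividing m and k the product of primes not dividing m, b(q₀t) = b(q₀)·μ(k)/(φ(k)²·φ(h)). -/

import Mathlib

open Complex

/-- e(u) = e^{2πiu}. -/
noncomputable def e (u : ℝ) : ℂ := Complex.exp (2 * Real.pi * Complex.I * u)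

/-- b(q) = φ(q)^{-2} c_{χ₁χ₂χ_{0,q}}(-m) τ(conj(χ₁)χ_{0,q}) τ(conj(χ₂)χ_{0,q}),
written out explicitly via the values of the characters involved. -/
noncomputable def bTerm {r₁ r₂ : ℕ} (χ₁ : DirichletCharacter ℂ r₁)
    (χ₂ : DirichletCharacter ℂ r₂) (m : ℤ) (q : ℕ) : ℂ :=
  (1 / ((Nat.totient q : ℂ)) ^ 2) *
    (∑ h ∈ Finset.range q,
      (if Nat.Coprime h q then χ₁ (h : ZMod r₁) * χ₂ (h : ZMod r₂) else 0) *
        e ((h : ℝ) * (-(m : ℝ)) / q)) *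
    (∑ h ∈ Finset.range q,
      (if Nat.Coprime h q then (starRingEnd ℂ) (χ₁ (h : ZMod r₁)) else 0) *
        e ((h : ℝ) / q)) *
    (∑ h ∈ Finset.range q,
      (if Nat.Coprime h q then (starRingEnd ℂ) (χ₂ (h : ZMod r₂)) else 0) *
        e ((h : ℝ) / q))


lemma e_add (u v : ℝ) : e (u + v) = e u * e v := by
  unfold e; rw [← Complex.exp_add]; congr 1; push_cast; ring

lemma e_int (k : ℤ) : e k = 1 := by
  unfold e
  rw [show (2 * (Real.pi:ℂ) * Complex.I * ((k:ℝ):ℂ)) = (k:ℤ) * (2 * Real.pi * Complex.I) by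
    push_cast; ring]
  exact Complex.exp_int_mul_two_pi_mul_I k

lemma e_zero : e 0 = 1 := by simpa using e_int 0

lemma e_nat_mul (n : ℕ) (u : ℝ) : e (n * u) = (e u) ^ n := by
  unfold e
  rw [← Complex.exp_nat_mul]
  congr 1; push_cast; ring

lemma e_eq_one_iff {q : ℕ} (hq : 0 < q) (d : ℤ) : e ((d:ℝ) / q) = 1 ↔ (q:ℤ) ∣ d := by
  unfold e
  rw [Complex.exp_eq_one_iff]
  have hpi : (2 * (Real.pi:ℂ) * Complex.I) ≠ 0 := by
    simp [Real.pi_ne_zero, Complex.I_ne_zero]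
  have hq' : (q:ℝ) ≠ 0 := Nat.cast_ne_zero.mpr hq.ne'
  constructor
  · rintro ⟨n, hn⟩
    have h2 : ((((d:ℝ)/q : ℝ)) : ℂ) = (n:ℂ) := by
      apply mul_left_cancel₀ hpi
      rw [hn]; ring
    have h3 : (d:ℝ)/q = (n:ℝ) := by exact_mod_cast h2
    have h4 : (d:ℝ) = n * q := by field_simp at h3; linarith
    exact ⟨n, by rw [mul_comm] at h4; exact_mod_cast h4⟩
  · rintro ⟨k, rfl⟩
    refine ⟨k, ?_⟩
    push_cast
    rw [mul_comm (q:ℂ) (k:ℂ), mul_div_assoc, div_self (by exact_mod_cast hq.ne' : (q:ℂ) ≠ 0)]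
    ring

lemma e_period {q : ℕ} (hq : 0 < q) (c : ℤ) (j r : ℕ) :
    e (((q * j + r : ℕ):ℝ) * c / q) = e ((r:ℝ) * c / q) := by
  have hq' : (q:ℝ) ≠ 0 := Nat.cast_ne_zero.mpr hq.ne'
  have harg : (((q * j + r : ℕ):ℝ) * c / q) = (((j * c : ℤ)):ℝ) + (r:ℝ) * c / q := by
    push_cast; field_simp
  rw [harg, e_add, e_int, one_mul]

lemma e_mod {q : ℕ} (hq : 0 < q) (c : ℤ) (h : ℕ) :
    e ((h:ℝ) * c / q) = e (((h % q : ℕ):ℝ) * c / q) := by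
  conv_lhs => rw [← Nat.div_add_mod h q]
  exact e_period hq c (h / q) (h % q)

lemma e_congr {q : ℕ} (hq : 0 < q) (c : ℤ) {h h' : ℕ} (hh : h ≡ h' [MOD q]) :
    e ((h:ℝ) * c / q) = e ((h':ℝ) * c / q) := by
  rw [e_mod hq c h, e_mod hq c h', hh]

lemma sum_e_eq_zero {q : ℕ} (hq : 0 < q) {d : ℤ} (hd : ¬ (q:ℤ) ∣ d) :
    ∑ k ∈ Finset.range q, e ((k:ℝ) * d / q) = 0 := by
  have hz : e ((d:ℝ)/q) ≠ 1 := fun h => hd ((e_eq_one_iff hq d).mp h)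
  have h1 : ∀ k : ℕ, e ((k:ℝ)*d/q) = (e ((d:ℝ)/q))^k := by
    intro k; rw [← e_nat_mul]; congr 1; ring
  simp only [h1]
  rw [geom_sum_eq hz]
  have h2 : (e ((d:ℝ)/q))^q = 1 := by
    rw [← e_nat_mul, show ((q:ℝ) * ((d:ℝ)/q)) = (d:ℝ) by
      field_simp]
    exact e_int d
  rw [h2]; simp

lemma coprime_congr {q h h' : ℕ} (hh : h ≡ h' [MOD q]) :
    h.Coprime q ↔ h'.Coprime q := by
  unfold Nat.Coprime
  rw [Nat.gcd_comm h q, Nat.gcd_rec, hh, ← Nat.gcd_rec, Nat.gcd_comm]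

lemma sum_range_mul_unit {q u : ℕ} (hq : 0 < q) (hu : Nat.Coprime u q) (W : ℕ → ℂ)
    (hW : ∀ a b : ℕ, a ≡ b [MOD q] → W a = W b) :
    ∑ h ∈ Finset.range q, W h = ∑ h ∈ Finset.range q, W (h * u) := by
  have hφ : 1 ≤ q.totient := Nat.totient_pos.mpr hq
  set u' := u ^ (q.totient - 1) with hu'
  have huu' : u * u' ≡ 1 [MOD q] := by
    have : u * u' = u ^ q.totient := by
      rw [hu', ← pow_succ', Nat.sub_add_cancel hφ]
    rw [this]
    exact Nat.ModEq.pow_totient hu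
  refine Finset.sum_nbij' (fun a => (a * u') % q) (fun b => (b * u) % q) ?_ ?_ ?_ ?_ ?_
  · intro a _; exact Finset.mem_range.mpr (Nat.mod_lt _ hq)
  · intro a _; exact Finset.mem_range.mpr (Nat.mod_lt _ hq)
  · intro a ha
    have h1 : (a * u') % q * u ≡ a [MOD q] := by
      calc (a * u') % q * u ≡ a * u' * u [MOD q] := Nat.ModEq.mul_right u (Nat.mod_modEq _ q)
        _ = a * (u * u') := by ring
        _ ≡ a * 1 [MOD q] := Nat.ModEq.mul_left a huu'
        _ = a := mul_one a
    have := h1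
    unfold Nat.ModEq at this
    show a * u' % q * u % q = a
    rw [this, Nat.mod_eq_of_lt (Finset.mem_range.mp ha)]
  · intro b hb
    have h1 : (b * u) % q * u' ≡ b [MOD q] := by
      calc (b * u) % q * u' ≡ b * u * u' [MOD q] := Nat.ModEq.mul_right u' (Nat.mod_modEq _ q)
        _ = b * (u * u') := by ring
        _ ≡ b * 1 [MOD q] := Nat.ModEq.mul_left b huu'
        _ = b := mul_one b
    have := h1
    unfold Nat.ModEq at this
    show b * u % q * u' % q = b
    rw [this, Nat.mod_eq_of_lt (Finset.mem_range.mp hb)]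
  · intro a _
    refine hW _ _ ?_
    calc a ≡ a * 1 [MOD q] := by rw [mul_one]
      _ ≡ a * (u * u') [MOD q] := (Nat.ModEq.mul_left a huu').symm
      _ = a * u' * u := by ring
      _ ≡ (a * u') % q * u [MOD q] := Nat.ModEq.mul_right u (Nat.mod_modEq _ q).symm

noncomputable def Gsum (n : ℕ) (F : ℕ → ℂ) (c : ℤ) : ℂ :=
  ∑ h ∈ Finset.range n, (if h.Coprime n then F h else 0) * e ((h:ℝ) * c / n)

noncomputable def Rsum (n : ℕ) (c : ℤ) : ℂ := Gsum n (fun _ => 1) c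

lemma euler_inv {a b : ℕ} (ha : 0 < a) (hba : b.Coprime a) :
    b * b ^ (a.totient - 1) ≡ 1 [MOD a] := by
  have hφ : 1 ≤ a.totient := Nat.totient_pos.mpr ha
  have : b * b ^ (a.totient - 1) = b ^ a.totient := by
    rw [← pow_succ', Nat.sub_add_cancel hφ]
  rw [this]
  exact Nat.ModEq.pow_totient hba

lemma Gsum_mul {a b : ℕ} (ha : 0 < a) (hb : 0 < b) (hab : a.Coprime b) (c : ℤ)
    (F : ℕ → ℂ) (hFper : ∀ x y : ℕ, x ≡ y [MOD a] → F x = F y)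
    (hFmul : ∀ x y : ℕ, F (x * y) = F x * F y) (hF1 : F 1 = 1) :
    Gsum (a * b) F c = F b * Gsum a F c * Rsum b c := by
  have hn : 0 < a * b := Nat.mul_pos ha hb
  set n := a * b with hn_def
  set b' := b ^ (a.totient - 1) with hb'_def
  set a' := a ^ (b.totient - 1) with ha'_def
  set cb : ℤ := (b' : ℤ) * c with hcb_def
  set ca : ℤ := (a' : ℤ) * c with hca_def
  have hbb' : b * b' ≡ 1 [MOD a] := euler_inv ha hab.symm
  have haa' : a * a' ≡ 1 [MOD b] := euler_inv hb hab
  set W : ℕ → ℂ := fun h => (if h.Coprime n then F h else 0) * e ((h:ℝ) * c / n) with hW_def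
  set fx : ℕ → ℂ := fun x => (if x.Coprime a then F x else 0) * e ((x:ℝ) * cb / a)
    with hfx_def
  set gy : ℕ → ℂ := fun y => (if y.Coprime b then (1:ℂ) else 0) * e ((y:ℝ) * ca / b)
    with hgy_def
  -- congruence facts about Z = x*(b*b') + y*(a*a')
  have hZa : ∀ x y : ℕ, x * (b * b') + y * (a * a') ≡ x [MOD a] := by
    intro x y
    calc x * (b * b') + y * (a * a') ≡ x * 1 + y * (a * a') [MOD a] :=
          Nat.ModEq.add_right _ (Nat.ModEq.mul_left x hbb')
      _ ≡ x * 1 + 0 [MOD a] := Nat.ModEq.add_left _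
          ((Nat.modEq_zero_iff_dvd).mpr ⟨y * a', by ring⟩)
      _ = x := by ring
  have hZb : ∀ x y : ℕ, x * (b * b') + y * (a * a') ≡ y [MOD b] := by
    intro x y
    calc x * (b * b') + y * (a * a') ≡ x * (b * b') + y * 1 [MOD b] :=
          Nat.ModEq.add_left _ (Nat.ModEq.mul_left y haa')
      _ ≡ 0 + y * 1 [MOD b] := Nat.ModEq.add_right _
          ((Nat.modEq_zero_iff_dvd).mpr ⟨x * b', by ring⟩)
      _ = y := by ring
  -- step 1: reindex the sum over range n by CRT
  have step1 : Gsum n F c =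
      ∑ z ∈ Finset.range a ×ˢ Finset.range b,
        W ((z.1 * (b * b') + z.2 * (a * a')) % n) := by
    unfold Gsum
    refine Finset.sum_nbij' (fun h => (h % a, h % b))
      (fun z => (z.1 * (b * b') + z.2 * (a * a')) % n) ?_ ?_ ?_ ?_ ?_
    · intro h _
      exact Finset.mem_product.mpr ⟨Finset.mem_range.mpr (Nat.mod_lt _ ha),
        Finset.mem_range.mpr (Nat.mod_lt _ hb)⟩
    · intro z _
      exact Finset.mem_range.mpr (Nat.mod_lt _ hn)
    · intro h hh
      have h1 : (h % a) * (b * b') + (h % b) * (a * a') ≡ h [MOD a] :=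
        (hZa _ _).trans (Nat.mod_modEq h a)
      have h2 : (h % a) * (b * b') + (h % b) * (a * a') ≡ h [MOD b] :=
        (hZb _ _).trans (Nat.mod_modEq h b)
      have h3 : (h % a) * (b * b') + (h % b) * (a * a') ≡ h [MOD n] :=
        (Nat.modEq_and_modEq_iff_modEq_mul hab).mp ⟨h1, h2⟩
      show ((h % a) * (b * b') + (h % b) * (a * a')) % n = h
      unfold Nat.ModEq at h3
      rw [h3, Nat.mod_eq_of_lt (Finset.mem_range.mp hh)]
    · intro z hz
      obtain ⟨hz1, hz2⟩ := Finset.mem_product.mp hz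
      have e1 : ((z.1 * (b * b') + z.2 * (a * a')) % n) % a = z.1 := by
        rw [Nat.mod_mod_of_dvd _ ⟨b, rfl⟩]
        have := hZa z.1 z.2
        unfold Nat.ModEq at this
        rw [this, Nat.mod_eq_of_lt (Finset.mem_range.mp hz1)]
      have e2 : ((z.1 * (b * b') + z.2 * (a * a')) % n) % b = z.2 := by
        rw [Nat.mod_mod_of_dvd _ ⟨a, mul_comm a b⟩]
        have := hZb z.1 z.2
        unfold Nat.ModEq at this
        rw [this, Nat.mod_eq_of_lt (Finset.mem_range.mp hz2)]
      show (_ % a, _ % b) = z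
      rw [e1, e2]
    · intro h hh
      have h3 : (h % a) * (b * b') + (h % b) * (a * a') ≡ h [MOD n] :=
        (Nat.modEq_and_modEq_iff_modEq_mul hab).mp
          ⟨(hZa _ _).trans (Nat.mod_modEq h a), (hZb _ _).trans (Nat.mod_modEq h b)⟩
      unfold Nat.ModEq at h3
      show (if h.Coprime n then F h else 0) * e ((h:ℝ) * c / n) = W _
      rw [hW_def]
      simp only []
      rw [h3, Nat.mod_eq_of_lt (Finset.mem_range.mp hh)]
  -- step 2: pointwise factorization
  have step2 : ∀ z ∈ Finset.range a ×ˢ Finset.range b,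
      W ((z.1 * (b * b') + z.2 * (a * a')) % n) = (F b * F b') * (fx z.1 * gy z.2) := by
    rintro ⟨x, y⟩ _
    set Z := x * (b * b') + y * (a * a') with hZ_def
    have hWmod : W (Z % n) = (if Z.Coprime n then F Z else 0) * e ((Z:ℝ) * c / n) := by
      rw [hW_def]
      simp only []
      rw [← e_mod hn c Z]
      congr 1
      by_cases hc1 : Z.Coprime n
      · rw [if_pos ((coprime_congr (Nat.mod_modEq Z n)).mpr hc1), if_pos hc1]
        exact hFper _ _ ((Nat.mod_modEq Z n).of_dvd ⟨b, rfl⟩)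
      · rw [if_neg (fun hcc => hc1 ((coprime_congr (Nat.mod_modEq Z n)).mp hcc)), if_neg hc1]
    have hcond : Z.Coprime n ↔ (x.Coprime a ∧ y.Coprime b) := by
      rw [hn_def, Nat.coprime_mul_iff_right, coprime_congr (hZa x y), coprime_congr (hZb x y)]
    have hFZ : F Z = F x * (F b * F b') := by
      have h1 : F Z = F (x * (b * b')) := by
        refine hFper _ _ ?_
        calc Z ≡ x * (b * b') + 0 [MOD a] := Nat.ModEq.add_left _
              ((Nat.modEq_zero_iff_dvd).mpr ⟨y * a', by ring⟩)
          _ = x * (b * b') := by ring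
      rw [h1, hFmul, hFmul]
    have hEZ : e ((Z:ℝ) * c / n) =
        e ((x:ℝ) * cb / a) * e ((y:ℝ) * ca / b) := by
      rw [← e_add]
      congr 1
      have ha0 : (a:ℝ) ≠ 0 := Nat.cast_ne_zero.mpr ha.ne'
      have hb0 : (b:ℝ) ≠ 0 := Nat.cast_ne_zero.mpr hb.ne'
      rw [hZ_def, hn_def, hcb_def, hca_def]
      push_cast
      field_simp
    rw [hWmod, hEZ, hFZ, hfx_def, hgy_def]
    simp only []
    by_cases hx : x.Coprime a
    · by_cases hy : y.Coprime b
      · rw [if_pos (hcond.mpr ⟨hx, hy⟩), if_pos hx, if_pos hy]; ring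
      · rw [if_neg (fun hc => hy (hcond.mp hc).2), if_neg hy]; ring
    · rw [if_neg (fun hc => hx (hcond.mp hc).1), if_neg hx]; ring
  rw [step1, Finset.sum_congr rfl step2]
  -- step 3: split the double sum
  have step3 : ∑ z ∈ Finset.range a ×ˢ Finset.range b, (F b * F b') * (fx z.1 * gy z.2)
      = (F b * F b') * ((∑ x ∈ Finset.range a, fx x) * (∑ y ∈ Finset.range b, gy y)) := by
    rw [← Finset.mul_sum]
    congr 1
    rw [Finset.sum_mul_sum]
    rw [Finset.sum_product]
  rw [step3]
  -- step 4: evaluate the two factors by unit reindexing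
  have hfx_per : ∀ u v : ℕ, u ≡ v [MOD a] → fx u = fx v := by
    intro u v huv
    rw [hfx_def]
    simp only []
    by_cases hu : u.Coprime a
    · rw [if_pos hu, if_pos ((coprime_congr huv).mp hu), hFper u v huv, e_congr ha _ huv]
    · rw [if_neg hu, if_neg (fun hv => hu ((coprime_congr huv).mpr hv)), e_congr ha _ huv]
  have step4 : ∑ x ∈ Finset.range a, fx x = F b * Gsum a F c := by
    rw [sum_range_mul_unit ha hab.symm fx hfx_per]
    unfold Gsum
    rw [Finset.mul_sum]
    refine Finset.sum_congr rfl ?_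
    intro x _
    rw [hfx_def]
    simp only []
    have hc1 : (x * b).Coprime a ↔ x.Coprime a := by
      rw [Nat.coprime_mul_iff_left]
      exact ⟨fun h => h.1, fun h => ⟨h, hab.symm⟩⟩
    have hearg : e (((x * b : ℕ):ℝ) * cb / a) = e ((x:ℝ) * c / a) := by
      have h1 : (((x * b : ℕ):ℝ) * cb / a) = (((x * (b * b') : ℕ):ℝ) * c / a) := by
        rw [hcb_def]; push_cast; ring
      rw [h1]
      have h2 : x * (b * b') ≡ x [MOD a] := by
        calc x * (b * b') ≡ x * 1 [MOD a] := Nat.ModEq.mul_left x hbb'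
          _ = x := mul_one x
      exact e_congr ha c h2
    rw [hearg]
    by_cases hx : x.Coprime a
    · rw [if_pos (hc1.mpr hx), if_pos hx, hFmul]; ring
    · rw [if_neg (fun h => hx (hc1.mp h)), if_neg hx]; ring
  have hgy_per : ∀ u v : ℕ, u ≡ v [MOD b] → gy u = gy v := by
    intro u v huv
    rw [hgy_def]
    simp only []
    by_cases hu : u.Coprime b
    · rw [if_pos hu, if_pos ((coprime_congr huv).mp hu), e_congr hb _ huv]
    · rw [if_neg hu, if_neg (fun hv => hu ((coprime_congr huv).mpr hv)), e_congr hb _ huv]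
  have step5 : ∑ y ∈ Finset.range b, gy y = Rsum b c := by
    rw [sum_range_mul_unit hb hab gy hgy_per]
    unfold Rsum Gsum
    refine Finset.sum_congr rfl ?_
    intro y _
    rw [hgy_def]
    simp only []
    have hc1 : (y * a).Coprime b ↔ y.Coprime b := by
      rw [Nat.coprime_mul_iff_left]
      exact ⟨fun h => h.1, fun h => ⟨h, hab⟩⟩
    have hearg : e (((y * a : ℕ):ℝ) * ca / b) = e ((y:ℝ) * c / b) := by
      have h1 : (((y * a : ℕ):ℝ) * ca / b) = (((y * (a * a') : ℕ):ℝ) * c / b) := by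
        rw [hca_def]; push_cast; ring
      rw [h1]
      have h2 : y * (a * a') ≡ y [MOD b] := by
        calc y * (a * a') ≡ y * 1 [MOD b] := Nat.ModEq.mul_left y haa'
          _ = y := mul_one y
      exact e_congr hb c h2
    rw [hearg]
    by_cases hy : y.Coprime b
    · rw [if_pos (hc1.mpr hy), if_pos hy]
    · rw [if_neg (fun h => hy (hc1.mp h)), if_neg hy]
  rw [step4, step5]
  have hFb : F b * F b' = F b * F b' := rfl
  have hFbb' : F b * F b' = 1 := by
    rw [← hFmul, hFper (b * b') 1 hbb', hF1]
  calc (F b * F b') * ((F b * Gsum a F c) * Rsum b c)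
      = (F b * F b' ) * (F b * Gsum a F c * Rsum b c) := by ring
    _ = F b * Gsum a F c * Rsum b c := by rw [hFbb', one_mul]

lemma Gsum_eq_zero {q p r : ℕ} (hq : 0 < q) (hp : p.Prime) (hpq : p * p ∣ q)
    (hr : r ∣ q / p) (F : ℕ → ℂ) (hFper : ∀ x y : ℕ, x ≡ y [MOD r] → F x = F y)
    {c : ℤ} (hc : ¬ (p:ℤ) ∣ c) : Gsum q F c = 0 := by
  have hpq1 : p ∣ q := (dvd_mul_right p p).trans hpq
  set s := q / p with hs_def
  have hq_eq : q = p * s := (Nat.mul_div_cancel' hpq1).symm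
  have hps : p ∣ s := (Nat.dvd_div_iff_mul_dvd hpq1).mpr hpq
  have hs0 : 0 < s := by
    rcases Nat.eq_zero_or_pos s with h|h
    · rw [hq_eq, h, mul_zero] at hq; exact absurd hq (lt_irrefl 0)
    · exact h
  have hqss : q ∣ s * s := by
    rw [hq_eq]; exact mul_dvd_mul hps (dvd_refl s)
  have hrq : r ∣ q := hr.trans (Nat.div_dvd_of_dvd hpq1)
  set u := 1 + s with hu_def
  have hu : u.Coprime q := by
    have h1 : (1 + s).Coprime s := Nat.coprime_add_self_left.mpr (Nat.coprime_one_left s)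
    exact Nat.Coprime.coprime_dvd_right hqss (h1.mul_right h1)
  have huk : ∀ k : ℕ, u ^ k ≡ 1 + k * s [MOD q] := by
    intro k
    induction k with
    | zero => simpa using Nat.ModEq.refl 1
    | succ k ih =>
        calc u ^ (k+1) = u ^ k * u := pow_succ u k
          _ ≡ (1 + k * s) * (1 + s) [MOD q] := Nat.ModEq.mul ih (Nat.ModEq.refl u)
          _ = 1 + (k+1) * s + k * (s * s) := by ring
          _ ≡ 1 + (k+1) * s + 0 [MOD q] := Nat.ModEq.add_left _
              ((Nat.modEq_zero_iff_dvd).mpr (Dvd.dvd.mul_left hqss k))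
          _ = 1 + (k+1) * s := by ring
  set W : ℕ → ℂ := fun h => (if h.Coprime q then F h else 0) * e ((h:ℝ) * c / q) with hW_def
  have hWper : ∀ x y : ℕ, x ≡ y [MOD q] → W x = W y := by
    intro x y hxy
    rw [hW_def]
    simp only []
    by_cases hx : x.Coprime q
    · rw [if_pos hx, if_pos ((coprime_congr hxy).mp hx), hFper x y (hxy.of_dvd hrq),
        e_congr hq c hxy]
    · rw [if_neg hx, if_neg (fun hy => hx ((coprime_congr hxy).mpr hy)), e_congr hq c hxy]
  have step1 : ∀ k : ℕ, Gsum q F c = ∑ h ∈ Finset.range q, W (h * u ^ k) :=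
    fun k => sum_range_mul_unit hq (Nat.Coprime.pow_left k hu) W hWper
  have step2 : ∀ h k : ℕ, W (h * u ^ k) = W h * e ((k:ℝ) * (((h:ℤ) * c : ℤ):ℝ) / p) := by
    intro h k
    by_cases hh : h.Coprime q
    · have hcop : (h * u ^ k).Coprime q := hh.mul (Nat.Coprime.pow_left k hu)
      rw [hW_def]
      simp only []
      rw [if_pos hcop, if_pos hh]
      have hF : F (h * u ^ k) = F h := by
        refine hFper _ _ ?_
        calc h * u ^ k ≡ h * (1 + k * s) [MOD r] :=
              Nat.ModEq.mul_left h ((huk k).of_dvd hrq)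
          _ = h + h * k * s := by ring
          _ ≡ h + 0 [MOD r] := Nat.ModEq.add_left h
              ((Nat.modEq_zero_iff_dvd).mpr (Dvd.dvd.mul_left hr (h * k)))
          _ = h := by rw [add_zero]
      have hE : e (((h * u ^ k : ℕ):ℝ) * c / q) =
          e ((h:ℝ) * c / q) * e ((k:ℝ) * (((h:ℤ) * c : ℤ):ℝ) / p) := by
        have h1 : h * u ^ k ≡ h * (1 + k * s) [MOD q] := Nat.ModEq.mul_left h (huk k)
        rw [e_congr hq c h1, ← e_add]
        congr 1
        have hp0 : (p:ℝ) ≠ 0 := Nat.cast_ne_zero.mpr hp.pos.ne'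
        have hs0' : (s:ℝ) ≠ 0 := Nat.cast_ne_zero.mpr hs0.ne'
        rw [hq_eq]
        push_cast
        field_simp
      rw [hF, hE]
      ring
    · have hh' : ¬ (h * u ^ k).Coprime q :=
        fun hcc => hh (Nat.Coprime.coprime_dvd_left (dvd_mul_right h _) hcc)
      rw [hW_def]
      simp only []
      rw [if_neg hh, if_neg hh']
      ring
  have key : (p:ℂ) * Gsum q F c = 0 := by
    have h1 : (p:ℂ) * Gsum q F c = ∑ _k ∈ Finset.range p, Gsum q F c := by
      rw [Finset.sum_const, Finset.card_range, nsmul_eq_mul]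
    rw [h1]
    calc ∑ k ∈ Finset.range p, Gsum q F c
        = ∑ k ∈ Finset.range p, ∑ h ∈ Finset.range q, W (h * u ^ k) :=
          Finset.sum_congr rfl fun k _ => step1 k
      _ = ∑ h ∈ Finset.range q, ∑ k ∈ Finset.range p, W (h * u ^ k) := Finset.sum_comm
      _ = ∑ h ∈ Finset.range q, W h * ∑ k ∈ Finset.range p,
            e ((k:ℝ) * (((h:ℤ) * c : ℤ):ℝ) / p) := by
          refine Finset.sum_congr rfl fun h _ => ?_
          rw [Finset.mul_sum]
          exact Finset.sum_congr rfl fun k _ => step2 h k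
      _ = 0 := by
          refine Finset.sum_eq_zero fun h _ => ?_
          by_cases hh : h.Coprime q
          · have hph : ¬ p ∣ h := by
              intro hd
              have : p ∣ 1 := hh ▸ Nat.dvd_gcd hd hpq1
              exact Nat.not_prime_one (Nat.dvd_one.mp this ▸ hp)
            have hpz : Prime (p:ℤ) := Nat.prime_iff_prime_int.mp hp
            have hnd : ¬ (p:ℤ) ∣ (h:ℤ) * c := by
              intro hd
              rcases hpz.dvd_mul.mp hd with h'|h'
              · exact hph (Int.natCast_dvd_natCast.mp h')
              · exact hc h'
            rw [sum_e_eq_zero hp.pos hnd, mul_zero]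
          · have : W h = 0 := by
              rw [hW_def]; simp only []; rw [if_neg hh, zero_mul]
            rw [this, zero_mul]
  have hp0 : (p:ℂ) ≠ 0 := Nat.cast_ne_zero.mpr hp.pos.ne'
  exact (mul_eq_zero.mp key).resolve_left hp0

lemma Rsum_one (c : ℤ) : Rsum 1 c = 1 := by
  unfold Rsum Gsum
  rw [Finset.sum_range_one]
  simp [Nat.coprime_one_right, e_zero]

lemma Rsum_prime {p : ℕ} (hp : p.Prime) (c : ℤ) :
    Rsum p c = if (p:ℤ) ∣ c then ((p:ℂ) - 1) else -1 := by
  have hp0 : 0 < p := hp.pos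
  have hstep : Rsum p c = (∑ h ∈ Finset.range p, e ((h:ℝ) * c / p)) - 1 := by
    unfold Rsum Gsum
    have hterm : ∀ h ∈ Finset.range p,
        (if h.Coprime p then (1:ℂ) else 0) * e ((h:ℝ) * c / p)
          = e ((h:ℝ) * c / p) - (if h = 0 then 1 else 0) := by
      intro h hh
      rcases eq_or_ne h 0 with rfl|h0
      · have : ¬ (0:ℕ).Coprime p := by
          simp [Nat.coprime_zero_left]
          exact hp.one_lt.ne'
        rw [if_neg this, if_pos rfl]
        have : e ((0:ℕ) * (c:ℝ) / p) = 1 := by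
          norm_num [e_zero]
        simp only [Nat.cast_zero]
        rw [show ((0:ℝ) * c / p) = 0 by ring, e_zero]
        ring
      · have hcop : h.Coprime p := by
          rw [Nat.coprime_comm]
          exact (hp.coprime_iff_not_dvd).mpr
            (fun hd => h0 (Nat.eq_zero_of_dvd_of_lt hd (Finset.mem_range.mp hh)))
        rw [if_pos hcop, if_neg h0]
        ring
    rw [Finset.sum_congr rfl hterm, Finset.sum_sub_distrib]
    congr 1
    have : (∑ h ∈ Finset.range p, if h = 0 then (1:ℂ) else 0)
        = ∑ h ∈ Finset.range p, if 0 = h then (1:ℂ) else 0 := by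
      refine Finset.sum_congr rfl fun h _ => ?_
      by_cases h0 : h = 0
      · rw [if_pos h0, if_pos h0.symm]
      · rw [if_neg h0, if_neg (fun hc => h0 hc.symm)]
    rw [this, Finset.sum_ite_eq]
    rw [if_pos (Finset.mem_range.mpr hp0)]
  by_cases hd : (p:ℤ) ∣ c
  · rw [if_pos hd, hstep]
    obtain ⟨c₀, rfl⟩ := hd
    have hsum : ∀ h ∈ Finset.range p, e ((h:ℝ) * ((((p:ℤ) * c₀ : ℤ)):ℝ) / p) = 1 := by
      intro h _
      have : ((h:ℝ) * (((p:ℤ) * c₀ : ℤ):ℝ) / p) = (((h:ℤ) * c₀ : ℤ):ℝ) := by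
        have : (p:ℝ) ≠ 0 := Nat.cast_ne_zero.mpr hp0.ne'
        push_cast
        field_simp
      rw [this, e_int]
    rw [Finset.sum_congr rfl hsum, Finset.sum_const, Finset.card_range, nsmul_eq_mul, mul_one]
  · rw [if_neg hd, hstep, sum_e_eq_zero hp0 hd]
    ring

lemma Rsum_squarefree : ∀ t : ℕ, Squarefree t → ∀ c : ℤ,
    Rsum t c = ∏ p ∈ t.primeFactors, (if (p:ℤ) ∣ c then ((p:ℂ) - 1) else -1) := by
  intro t
  induction t using Nat.strong_induction_on with
  | _ t ih =>
    intro ht c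
    rcases eq_or_ne t 1 with rfl|ht1
    · simp [Rsum_one]
    have ht0 : t ≠ 0 := ht.ne_zero
    set p := t.minFac with hp_def
    have hp : p.Prime := Nat.minFac_prime ht1
    set s := t / p with hs_def
    have hts : t = p * s := (Nat.mul_div_cancel' (Nat.minFac_dvd t)).symm
    have hs0 : s ≠ 0 := by
      intro h; rw [hts, h, mul_zero] at ht0; exact ht0 rfl
    have hpns : ¬ p ∣ s := by
      intro hd
      have : p * p ∣ t := by
        rw [hts]; exact mul_dvd_mul (dvd_refl p) hd
      exact hp.not_isUnit (ht p this)
    have hcop : p.Coprime s := (hp.coprime_iff_not_dvd).mpr hpns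
    have hslt : s < t := by
      rw [hts]
      have hs0' := Nat.pos_of_ne_zero hs0
      nlinarith [hp.one_lt]
    have hssf : Squarefree s := Squarefree.squarefree_of_dvd ⟨p, by rw [hts]; ring⟩ ht
    have hmul : Rsum t c = Rsum p c * Rsum s c := by
      rw [hts]
      have := Gsum_mul hp.pos (Nat.pos_of_ne_zero hs0) hcop c (fun _ => (1:ℂ))
        (fun _ _ _ => rfl) (fun _ _ => (one_mul 1).symm) rfl
      show Gsum (p * s) (fun _ => (1:ℂ)) c = Gsum p (fun _ => (1:ℂ)) c * Gsum s (fun _ => (1:ℂ)) c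
      rw [this]
      simp only [one_mul]
      rfl
    have hpf : t.primeFactors = insert p s.primeFactors := by
      rw [hts, Nat.primeFactors_mul hp.pos.ne' hs0, hp.primeFactors]
      rfl
    have hpnotmem : p ∉ s.primeFactors := by
      intro hmem
      exact hpns (Nat.dvd_of_mem_primeFactors hmem)
    rw [hmul, hpf, Finset.prod_insert hpnotmem, Rsum_prime hp c, ih s hslt hssf c]

lemma prod_primes_totient {s : Finset ℕ} (hs : ∀ p ∈ s, p.Prime) :
    (∏ p ∈ s, p).totient = ∏ p ∈ s, (p - 1) := by
  induction s using Finset.induction_on with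
  | empty => simp
  | @insert a s ha ih =>
    have hprime : ∀ p ∈ s, p.Prime := fun p hp => hs p (Finset.mem_insert_of_mem hp)
    have hap : a.Prime := hs a (Finset.mem_insert_self a s)
    have hcop : a.Coprime (∏ p ∈ s, p) := Nat.Coprime.prod_right fun q hq =>
      (Nat.coprime_primes hap (hprime q hq)).mpr (fun he => ha (he ▸ hq))
    rw [Finset.prod_insert ha, Finset.prod_insert ha, Nat.totient_mul hcop,
      Nat.totient_prime hap, ih hprime]

lemma prod_primes_squarefree {s : Finset ℕ} (hs : ∀ p ∈ s, p.Prime) :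
    Squarefree (∏ p ∈ s, p) := by
  induction s using Finset.induction_on with
  | empty => simp only [Finset.prod_empty]; exact squarefree_one
  | @insert a s ha ih =>
    have hprime : ∀ p ∈ s, p.Prime := fun p hp => hs p (Finset.mem_insert_of_mem hp)
    have hap : a.Prime := hs a (Finset.mem_insert_self a s)
    have hcop : a.Coprime (∏ p ∈ s, p) := Nat.Coprime.prod_right fun q hq =>
      (Nat.coprime_primes hap (hprime q hq)).mpr (fun he => ha (he ▸ hq))
    rw [Finset.prod_insert ha]
    exact (Nat.squarefree_mul hcop).mpr ⟨hap.squarefree, ih hprime⟩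

lemma prod_primes_moebius {s : Finset ℕ} (hs : ∀ p ∈ s, p.Prime) :
    (ArithmeticFunction.moebius (∏ p ∈ s, p) : ℤ) = (-1) ^ s.card := by
  induction s using Finset.induction_on with
  | empty => simp
  | @insert a s ha ih =>
    have hprime : ∀ p ∈ s, p.Prime := fun p hp => hs p (Finset.mem_insert_of_mem hp)
    have hap : a.Prime := hs a (Finset.mem_insert_self a s)
    have hcop : a.Coprime (∏ p ∈ s, p) := Nat.Coprime.prod_right fun q hq =>
      (Nat.coprime_primes hap (hprime q hq)).mpr (fun he => ha (he ▸ hq))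
    rw [Finset.prod_insert ha,
      ArithmeticFunction.isMultiplicative_moebius.map_mul_of_coprime hcop,
      ArithmeticFunction.moebius_apply_prime hap, ih hprime, Finset.card_insert_of_notMem ha,
      pow_succ]
    ring

/-- If b(q₀t) ≠ 0 for some positive integer t (q₀ = [r₁,r₂]), then t is squarefree,
(t,q₀) = 1, and writing t = hk with h the product of primes of t dividing m and k
the product of the primes of t not dividing m, b(q₀t) = b(q₀)·μ(k)/(φ(k)²·φ(h)). -/
theorem bTerm_multiple {r₁ r₂ : ℕ} (χ₁ : DirichletCharacter ℂ r₁)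
    (χ₂ : DirichletCharacter ℂ r₂) (h₁ : χ₁.IsPrimitive) (h₂ : χ₂.IsPrimitive)
    (m : ℤ) (t : ℕ) (ht : 0 < t)
    (hb : bTerm χ₁ χ₂ m (Nat.lcm r₁ r₂ * t) ≠ 0) :
    Squarefree t ∧ Nat.Coprime t (Nat.lcm r₁ r₂) ∧
      bTerm χ₁ χ₂ m (Nat.lcm r₁ r₂ * t) =
        bTerm χ₁ χ₂ m (Nat.lcm r₁ r₂) *
          ((ArithmeticFunction.moebius
              (∏ p ∈ t.primeFactors.filter (fun p : ℕ => ¬ ((p : ℤ) ∣ m)), p) : ℤ) : ℂ) /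
          (((Nat.totient (∏ p ∈ t.primeFactors.filter (fun p : ℕ => ¬ ((p : ℤ) ∣ m)), p) : ℂ)) ^ 2 *
            (Nat.totient (∏ p ∈ t.primeFactors.filter (fun p : ℕ => (p : ℤ) ∣ m), p) : ℂ)) := by
  classical
  set q₀ := Nat.lcm r₁ r₂ with hq₀_def
  set F₁ : ℕ → ℂ := fun h => χ₁ ((h : ZMod r₁)) * χ₂ ((h : ZMod r₂)) with hF₁
  set F₂ : ℕ → ℂ := fun h => (starRingEnd ℂ) (χ₁ ((h : ZMod r₁))) with hF₂
  set F₃ : ℕ → ℂ := fun h => (starRingEnd ℂ) (χ₂ ((h : ZMod r₂))) with hF₃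
  -- rewrite bTerm via Gsum
  have hbT : ∀ n : ℕ, bTerm χ₁ χ₂ m n
      = (1/((n.totient : ℂ))^2) * Gsum n F₁ (-m) * Gsum n F₂ 1 * Gsum n F₃ 1 := by
    intro n
    unfold bTerm Gsum
    congr 1
    · congr 1
      · congr 1
        refine Finset.sum_congr rfl fun h _ => ?_
        congr 1
        congr 1
        push_cast
        ring
      · refine Finset.sum_congr rfl fun h _ => ?_
        congr 1
        congr 1
        push_cast
        ring
    · refine Finset.sum_congr rfl fun h _ => ?_
      congr 1
      congr 1
      push_cast
      ring
  have hq₀_ne : q₀ ≠ 0 := by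
    intro h0
    apply hb
    rw [show q₀ * t = 0 from by rw [h0, zero_mul]]
    rw [hbT 0]
    simp
  have hq₀_pos : 0 < q₀ := Nat.pos_of_ne_zero hq₀_ne
  have hr₁ : r₁ ∣ q₀ := Nat.dvd_lcm_left r₁ r₂
  have hr₂ : r₂ ∣ q₀ := Nat.dvd_lcm_right r₁ r₂
  have hq_pos : 0 < q₀ * t := Nat.mul_pos hq₀_pos ht
  -- periodicity and multiplicativity
  have hF₁per : ∀ x y : ℕ, x ≡ y [MOD q₀] → F₁ x = F₁ y := by
    intro x y hxy
    rw [hF₁]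
    simp only []
    rw [(ZMod.natCast_eq_natCast_iff x y r₁).mpr (hxy.of_dvd hr₁),
      (ZMod.natCast_eq_natCast_iff x y r₂).mpr (hxy.of_dvd hr₂)]
  have hF₂per : ∀ x y : ℕ, x ≡ y [MOD r₁] → F₂ x = F₂ y := by
    intro x y hxy
    rw [hF₂]
    simp only []
    rw [(ZMod.natCast_eq_natCast_iff x y r₁).mpr hxy]
  have hF₂per_q₀ : ∀ x y : ℕ, x ≡ y [MOD q₀] → F₂ x = F₂ y :=
    fun x y hxy => hF₂per x y (hxy.of_dvd hr₁)
  have hF₃per_q₀ : ∀ x y : ℕ, x ≡ y [MOD q₀] → F₃ x = F₃ y := by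
    intro x y hxy
    rw [hF₃]
    simp only []
    rw [(ZMod.natCast_eq_natCast_iff x y r₂).mpr (hxy.of_dvd hr₂)]
  have hF₁mul : ∀ x y : ℕ, F₁ (x * y) = F₁ x * F₁ y := by
    intro x y
    rw [hF₁]
    simp only [Nat.cast_mul, map_mul]
    ring
  have hF₂mul : ∀ x y : ℕ, F₂ (x * y) = F₂ x * F₂ y := by
    intro x y
    rw [hF₂]
    simp only [Nat.cast_mul, map_mul]
  have hF₃mul : ∀ x y : ℕ, F₃ (x * y) = F₃ x * F₃ y := by
    intro x y
    rw [hF₃]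
    simp only [Nat.cast_mul, map_mul]
  have hF₁one : F₁ 1 = 1 := by
    rw [hF₁]; simp only [Nat.cast_one, map_one]; ring
  have hF₂one : F₂ 1 = 1 := by
    rw [hF₂]; simp only [Nat.cast_one, map_one]
  have hF₃one : F₃ 1 = 1 := by
    rw [hF₃]; simp only [Nat.cast_one, map_one]
  -- key vanishing consequence
  have hvanish : ∀ p : ℕ, p.Prime → p * p ∣ q₀ * t → p ∣ t → False := by
    intro p hp hpp hpt
    apply hb
    rw [hbT]
    have hr : r₁ ∣ (q₀ * t) / p := by
      rw [Nat.mul_div_assoc q₀ hpt]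
      exact hr₁.trans (dvd_mul_right q₀ (t / p))
    have hc1 : ¬ ((p:ℤ) ∣ (1:ℤ)) := by
      intro hd
      have h1 : (p:ℤ) = 1 := Int.eq_one_of_dvd_one (by positivity) hd
      exact hp.one_lt.ne (by exact_mod_cast h1.symm)
    have h2 : Gsum (q₀ * t) F₂ 1 = 0 := Gsum_eq_zero hq_pos hp hpp hr F₂ hF₂per hc1
    rw [h2]
    ring
  -- squarefreeness
  have hsf : Squarefree t := by
    rw [Nat.squarefree_iff_prime_squarefree]
    intro p hp hdvd
    exact hvanish p hp (Dvd.dvd.mul_left hdvd q₀)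
      ((dvd_mul_left p p).trans hdvd)
  -- coprimality
  have hcop : Nat.Coprime t q₀ := by
    by_contra hnc
    have hp : (Nat.gcd t q₀).minFac.Prime := Nat.minFac_prime hnc
    have hpt : (Nat.gcd t q₀).minFac ∣ t :=
      (Nat.minFac_dvd _).trans (Nat.gcd_dvd_left t q₀)
    have hpq₀ : (Nat.gcd t q₀).minFac ∣ q₀ :=
      (Nat.minFac_dvd _).trans (Nat.gcd_dvd_right t q₀)
    exact hvanish _ hp (mul_dvd_mul hpq₀ hpt) hpt
  refine ⟨hsf, hcop, ?_⟩
  -- main formula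
  have hq₀t : q₀.Coprime t := hcop.symm
  have e₁ := Gsum_mul hq₀_pos ht hq₀t (-m) F₁ hF₁per hF₁mul hF₁one
  have e₂ := Gsum_mul hq₀_pos ht hq₀t 1 F₂ hF₂per_q₀ hF₂mul hF₂one
  have e₃ := Gsum_mul hq₀_pos ht hq₀t 1 F₃ hF₃per_q₀ hF₃mul hF₃one
  set sk := t.primeFactors.filter (fun p : ℕ => ¬ ((p : ℤ) ∣ m)) with hsk
  set sh := t.primeFactors.filter (fun p : ℕ => ((p : ℤ) ∣ m)) with hsh
  have hKprime : ∀ p ∈ sk, p.Prime :=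
    fun p hp => Nat.prime_of_mem_primeFactors (Finset.mem_filter.mp hp).1
  have hHprime : ∀ p ∈ sh, p.Prime :=
    fun p hp => Nat.prime_of_mem_primeFactors (Finset.mem_filter.mp hp).1
  set K := ∏ p ∈ sk, p with hK
  set H := ∏ p ∈ sh, p with hH
  have hHK : H * K = t := by
    rw [hH, hK, hsh, hsk]
    rw [Finset.prod_filter_mul_prod_filter_not t.primeFactors (fun p : ℕ => (p:ℤ) ∣ m)
      (fun p => p)]
    exact Nat.prod_primeFactors_of_squarefree hsf
  have hHKcop : H.Coprime K := by
    rw [hH]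
    refine Nat.coprime_prod_left_iff.mpr fun p hp => ?_
    rw [hK]
    refine Nat.Coprime.prod_right fun q hq => ?_
    refine (Nat.coprime_primes (hHprime p hp) (hKprime q hq)).mpr ?_
    intro he
    exact (Finset.mem_filter.mp hq).2 (he ▸ (Finset.mem_filter.mp hp).2)
  -- totients
  have hφ_split : ((q₀ * t).totient : ℂ) = (q₀.totient : ℂ) * ((H.totient : ℂ) * (K.totient : ℂ)) := by
    rw [Nat.totient_mul hq₀t]
    rw [show t = H * K from hHK.symm, Nat.totient_mul hHKcop]
    push_cast
    ring
  have hφH : (H.totient : ℂ) = ∏ p ∈ sh, ((p:ℂ) - 1) := by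
    rw [hH, prod_primes_totient hHprime]
    rw [Nat.cast_prod]
    refine Finset.prod_congr rfl fun p hp => ?_
    rw [Nat.cast_sub (hHprime p hp).one_lt.le]
    norm_num
  have hφK : (K.totient : ℂ) = ∏ p ∈ sk, ((p:ℂ) - 1) := by
    rw [hK, prod_primes_totient hKprime]
    rw [Nat.cast_prod]
    refine Finset.prod_congr rfl fun p hp => ?_
    rw [Nat.cast_sub (hKprime p hp).one_lt.le]
    norm_num
  have hμK : ((ArithmeticFunction.moebius K : ℤ) : ℂ) = (-1:ℂ) ^ sk.card := by
    rw [hK, prod_primes_moebius hKprime]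
    push_cast
    ring
  -- Ramanujan sums
  have hRm : Rsum t (-m) = (∏ p ∈ sh, ((p:ℂ) - 1)) * (-1:ℂ) ^ sk.card := by
    rw [Rsum_squarefree t hsf (-m)]
    have h1 : ∀ p ∈ t.primeFactors, (if (p:ℤ) ∣ -m then ((p:ℂ) - 1) else -1)
        = (if (p:ℤ) ∣ m then ((p:ℂ) - 1) else -1) := by
      intro p _
      by_cases hd : (p:ℤ) ∣ m
      · rw [if_pos (Int.dvd_neg.mpr hd), if_pos hd]
      · rw [if_neg (fun hc => hd (Int.dvd_neg.mp hc)), if_neg hd]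
    refine (Finset.prod_congr rfl h1).trans ?_
    rw [← Finset.prod_filter_mul_prod_filter_not t.primeFactors (fun p : ℕ => (p:ℤ) ∣ m)
        (fun p : ℕ => (if (p:ℤ) ∣ m then ((p:ℂ) - 1) else -1))]
    congr 1
    · refine Finset.prod_congr hsh.symm fun p hp => ?_
      have hpm : (p:ℤ) ∣ m := by simpa using (Finset.mem_filter.mp hp).2
      exact if_pos hpm
    · refine Eq.trans (Finset.prod_congr hsk.symm fun p hp => ?_) (Finset.prod_const _)
      have hpm : ¬ ((p:ℤ) ∣ m) := by simpa using (Finset.mem_filter.mp hp).2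
      exact if_neg hpm
  have hR1' : Rsum t 1 = (-1:ℂ) ^ t.primeFactors.card := by
    rw [Rsum_squarefree t hsf 1, ← Finset.prod_const]
    refine Finset.prod_congr rfl fun p hp => ?_
    refine if_neg fun hc => ?_
    have hp' := Nat.prime_of_mem_primeFactors hp
    have hone : (p:ℤ) = 1 := Int.eq_one_of_dvd_one (by positivity) hc
    exact hp'.one_lt.ne (by exact_mod_cast hone.symm)
  have hR1sq : Rsum t 1 * Rsum t 1 = 1 := by
    rw [hR1', ← pow_add]
    exact Even.neg_one_pow ⟨t.primeFactors.card, rfl⟩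
  -- character values at t
  have hcop₁ : t.Coprime r₁ := Nat.Coprime.coprime_dvd_right hr₁ hcop
  have hcop₂ : t.Coprime r₂ := Nat.Coprime.coprime_dvd_right hr₂ hcop
  have hw₁ : χ₁ ((t : ZMod r₁)) * (starRingEnd ℂ) (χ₁ ((t : ZMod r₁))) = 1 := by
    have hnorm : ‖χ₁ ((t : ZMod r₁))‖ = 1 := by
      rw [← ZMod.coe_unitOfCoprime t hcop₁]
      exact χ₁.unit_norm_eq_one (ZMod.unitOfCoprime t hcop₁)
    rw [Complex.mul_conj, Complex.normSq_eq_norm_sq, hnorm]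
    norm_num
  have hw₂ : χ₂ ((t : ZMod r₂)) * (starRingEnd ℂ) (χ₂ ((t : ZMod r₂))) = 1 := by
    have hnorm : ‖χ₂ ((t : ZMod r₂))‖ = 1 := by
      rw [← ZMod.coe_unitOfCoprime t hcop₂]
      exact χ₂.unit_norm_eq_one (ZMod.unitOfCoprime t hcop₂)
    rw [Complex.mul_conj, Complex.normSq_eq_norm_sq, hnorm]
    norm_num
  -- nonvanishing
  have hφq₀ : (q₀.totient : ℂ) ≠ 0 :=
    Nat.cast_ne_zero.mpr (Nat.totient_pos.mpr hq₀_pos).ne'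
  have hPh : (∏ p ∈ sh, ((p:ℂ) - 1)) ≠ 0 := by
    refine Finset.prod_ne_zero_iff.mpr fun p hp => ?_
    have := (hHprime p hp).one_lt
    intro hzero
    have : (p:ℂ) = 1 := by linear_combination hzero
    exact (hHprime p hp).one_lt.ne (by exact_mod_cast this.symm)
  have hPk : (∏ p ∈ sk, ((p:ℂ) - 1)) ≠ 0 := by
    refine Finset.prod_ne_zero_iff.mpr fun p hp => ?_
    intro hzero
    have : (p:ℂ) = 1 := by linear_combination hzero
    exact (hKprime p hp).one_lt.ne (by exact_mod_cast this.symm)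
  -- final computation
  rw [hbT (q₀ * t), hbT q₀, e₁, e₂, e₃, hRm, hφ_split, hφH, hφK, hμK]
  rw [hF₁, hF₂, hF₃]
  simp only []
  set z₁ := χ₁ ((t : ZMod r₁)) with hz₁
  set z₂ := χ₂ ((t : ZMod r₂)) with hz₂
  set A := Gsum q₀ F₁ (-m) with hA
  set B := Gsum q₀ F₂ 1 with hB
  set C := Gsum q₀ F₃ 1 with hC
  set Q := Rsum t 1 with hQ
  set P := ∏ p ∈ sh, ((p:ℂ) - 1) with hP
  set Pk := ∏ p ∈ sk, ((p:ℂ) - 1) with hPk_def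
  set N := (-1:ℂ) ^ sk.card with hN
  calc (1/((q₀.totient : ℂ) * (P * Pk))^2) * ((z₁ * z₂) * A * (P * N))
        * ((starRingEnd ℂ) z₁ * B * Q) * ((starRingEnd ℂ) z₂ * C * Q)
      = (z₁ * (starRingEnd ℂ) z₁) * (z₂ * (starRingEnd ℂ) z₂) * (Q * Q)
          * ((1/((q₀.totient : ℂ) * (P * Pk))^2) * A * B * C * (P * N)) := by ring
    _ = (1/((q₀.totient : ℂ) * (P * Pk))^2) * A * B * C * (P * N) := by
        rw [hw₁, hw₂, hR1sq]
        ring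
    _ = (1/((q₀.totient : ℂ))^2) * A * B * C * N / (Pk^2 * P) := by
        field_simp
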